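/- Let n > 1 be an odd integer. If a (K_2,K_{1,n})-URD(v;1,s) exists with s ≥ 1, then v is even, (n+1) divides v, and n divides v−2. -/
import Mathlib


/-- The edge set of the star with center `p.1` and leaf set `p.2`. -/
def starEdgeSet {V : Type*} [DecidableEq V] (p : V × Finset V) : Finset (Sym2 V) :=
  p.2.image (fun l => s(p.1, l))

/-- `P` is a family of vertex-disjoint `n`-stars (each given by a center and a set of
`n` leaves) whose vertex sets partition the whole vertex set. -/
def IsStarFactorFamily {V : Type*} [Fintype V] [DecidableEq V] (n : ℕ)
    (P : Finset (V × Finset V)) : Prop :=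
  (∀ p ∈ P, p.2.card = n ∧ p.1 ∉ p.2) ∧
  (∀ x : V, ∃! p, p ∈ P ∧ (x = p.1 ∨ x ∈ p.2))

/-- `E` is the edge set of a `K_{1,n}`-factor of the complete graph on `V`. -/
def IsStarFactor {V : Type*} [Fintype V] [DecidableEq V] (n : ℕ)
    (E : Finset (Sym2 V)) : Prop :=
  ∃ P : Finset (V × Finset V), IsStarFactorFamily n P ∧ E = P.biUnion starEdgeSet

/-- `E` is the edge set of a perfect matching (a `1`-factor, i.e. a `K_2`-factor). -/
def IsOneFactor {V : Type*} [Fintype V] [DecidableEq V] (E : Finset (Sym2 V)) : Prop :=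
  (∀ e ∈ E, ¬ e.IsDiag) ∧ ∀ x : V, ∃! e, e ∈ E ∧ x ∈ e

/-- A `(K_2, K_{1,n})`-URD`(v; r, s)`: a partition of the edge set of the complete graph
`K_v` into `r` classes that are `1`-factors and `s` classes that are `K_{1,n}`-factors. -/
def IsURD (n v r s : ℕ) : Prop :=
  ∃ (M : Fin r → Finset (Sym2 (Fin v))) (F : Fin s → Finset (Sym2 (Fin v))),
    (∀ i, IsOneFactor (M i)) ∧
    (∀ j, IsStarFactor n (F j)) ∧
    (∀ i j, i ≠ j → Disjoint (M i) (M j)) ∧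
    (∀ i j, i ≠ j → Disjoint (F i) (F j)) ∧
    (∀ i j, Disjoint (M i) (F j)) ∧
    (∀ e : Sym2 (Fin v),
      (e ∈ Finset.univ.biUnion M ∪ Finset.univ.biUnion F) ↔ ¬ e.IsDiag)

open Finset

private lemma urd_filter_mem_card_of_not_isDiag {V : Type*} [Fintype V] [DecidableEq V]
    (e : Sym2 V) (he : ¬ e.IsDiag) :
    (univ.filter (fun x => x ∈ e)).card = 2 := by
  induction e with
  | _ a b =>
    rw [Sym2.mk_isDiag_iff] at he
    have : univ.filter (fun x => x ∈ s(a,b)) = {a, b} := by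
      ext x; simp [Sym2.mem_iff]
    rw [this, Finset.card_pair he]

private lemma urd_oneFactor_card {V : Type*} [Fintype V] [DecidableEq V]
    {E : Finset (Sym2 V)} (h : IsOneFactor E) :
    Fintype.card V = 2 * E.card := by
  obtain ⟨hd, hu⟩ := h
  choose f hf using hu
  rw [← card_univ, Finset.card_eq_sum_card_fiberwise (f := f) (fun x _ => (hf x).1.1)]
  rw [Finset.sum_congr rfl (fun e he => ?_), Finset.sum_const, smul_eq_mul, mul_comm]
  have : univ.filter (fun x => f x = e) = univ.filter (fun x => x ∈ e) := by
    ext x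
    simp only [mem_filter, mem_univ, true_and]
    constructor
    · rintro rfl; exact (hf x).1.2
    · intro hx; exact ((hf x).2 e ⟨he, hx⟩).symm
  rw [this, urd_filter_mem_card_of_not_isDiag e (hd e he)]

private lemma urd_oneFactor_deg {V : Type*} [Fintype V] [DecidableEq V]
    {E : Finset (Sym2 V)} (h : IsOneFactor E) (x : V) :
    (E.filter (fun e => x ∈ e)).card = 1 := by
  obtain ⟨e, ⟨he, hx⟩, hun⟩ := h.2 x
  rw [Finset.card_eq_one]
  refine ⟨e, ?_⟩
  ext f
  simp only [mem_filter, mem_singleton]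
  constructor
  · rintro ⟨hf, hxf⟩; exact hun f ⟨hf, hxf⟩
  · rintro rfl; exact ⟨he, hx⟩

private lemma urd_starFamily_card {V : Type*} [Fintype V] [DecidableEq V]
    {n : ℕ} {P : Finset (V × Finset V)} (h : IsStarFactorFamily n P) :
    Fintype.card V = (n+1) * P.card := by
  obtain ⟨hc, hu⟩ := h
  choose g hg using hu
  rw [← card_univ, Finset.card_eq_sum_card_fiberwise (f := g) (fun x _ => (hg x).1.1)]
  rw [Finset.sum_congr rfl (fun p hp => ?_), Finset.sum_const, smul_eq_mul, mul_comm]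
  have h1 : univ.filter (fun x => g x = p) = insert p.1 p.2 := by
    ext x
    simp only [mem_filter, mem_univ, true_and, mem_insert]
    constructor
    · rintro rfl
      exact (hg x).1.2.imp id id
    · intro hx
      exact ((hg x).2 p ⟨hp, by exact hx.imp id id⟩).symm
  rw [h1, Finset.card_insert_of_notMem (hc p hp).2, (hc p hp).1]

private lemma urd_starFamily_centers_card {V : Type*} [Fintype V] [DecidableEq V]
    {n : ℕ} {P : Finset (V × Finset V)}
    (h : IsStarFactorFamily n P) : (P.image Prod.fst).card = P.card := by
  apply Finset.card_image_of_injOn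
  intro p hp q hq hpq
  exact ((h.2 p.1).unique ⟨hp, Or.inl rfl⟩ ⟨hq, Or.inl hpq⟩)

private lemma urd_star_deg {V : Type*} [Fintype V] [DecidableEq V]
    {n : ℕ} {P : Finset (V × Finset V)} (h : IsStarFactorFamily n P) (x : V) :
    ((P.biUnion starEdgeSet).filter (fun e => x ∈ e)).card
      = if x ∈ P.image Prod.fst then n else 1 := by
  obtain ⟨hc, hu⟩ := h
  obtain ⟨p, ⟨hpP, hpx⟩, hpu⟩ := hu x
  have hstep : (P.biUnion starEdgeSet).filter (fun e => x ∈ e)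
      = (starEdgeSet p).filter (fun e => x ∈ e) := by
    ext e
    simp only [mem_filter, mem_biUnion]
    constructor
    · rintro ⟨⟨q, hqP, hqe⟩, hxe⟩
      refine ⟨?_, hxe⟩
      obtain ⟨l, hl, rfl⟩ := Finset.mem_image.mp hqe
      have : x = q.1 ∨ x ∈ q.2 := by
        rcases Sym2.mem_iff.mp hxe with h1 | h1
        · exact Or.inl h1
        · exact Or.inr (h1 ▸ hl)
      have hq : q = p := hpu q ⟨hqP, this⟩
      subst hq
      exact Finset.mem_image.mpr ⟨l, hl, rfl⟩
    · rintro ⟨he, hxe⟩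
      exact ⟨⟨p, hpP, he⟩, hxe⟩
  rw [hstep]
  rcases hpx with hxc | hxl
  · rw [if_pos (Finset.mem_image.mpr ⟨p, hpP, hxc.symm⟩)]
    have : (starEdgeSet p).filter (fun e => x ∈ e) = starEdgeSet p := by
      apply Finset.filter_true_of_mem
      intro e he
      obtain ⟨l, hl, rfl⟩ := Finset.mem_image.mp he
      exact hxc ▸ Sym2.mem_mk_left _ _
    rw [this, starEdgeSet, Finset.card_image_of_injOn, (hc p hpP).1]
    intro l1 h1 l2 h2 hl
    rcases Sym2.eq_iff.mp hl with ⟨_, h⟩ | ⟨h1', h2'⟩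
    · exact h
    · exact h2'.trans h1'
  · have hxne : x ≠ p.1 := by rintro rfl; exact (hc p hpP).2 hxl
    have hnotc : x ∉ P.image Prod.fst := by
      intro hx
      obtain ⟨q, hq, rfl⟩ := Finset.mem_image.mp hx
      have : q = p := hpu q ⟨hq, Or.inl rfl⟩
      exact hxne (by rw [this])
    rw [if_neg hnotc]
    have : (starEdgeSet p).filter (fun e => x ∈ e) = {s(p.1, x)} := by
      ext e
      simp only [mem_filter, mem_singleton, starEdgeSet, Finset.mem_image]
      constructor
      · rintro ⟨⟨l, hl, rfl⟩, hxe⟩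
        rcases Sym2.mem_iff.mp hxe with h1 | h1
        · exact absurd h1 hxne
        · rw [h1]
      · rintro rfl
        exact ⟨⟨x, hxl, rfl⟩, Sym2.mem_mk_right _ _⟩
    rw [this, Finset.card_singleton]

private lemma urd_total_deg {V : Type*} [Fintype V] [DecidableEq V] (x : V) :
    ((univ.filter (fun e : Sym2 V => ¬ e.IsDiag)).filter (fun e => x ∈ e)).card
      = Fintype.card V - 1 := by
  have h1 : (univ.filter (fun e : Sym2 V => ¬ e.IsDiag)).filter (fun e => x ∈ e)
      = (univ.erase x).image (fun y => s(x,y)) := by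
    ext e
    simp only [mem_filter, mem_univ, true_and, Finset.mem_image, mem_erase]
    constructor
    · rintro ⟨hd, hx⟩
      induction e with
      | _ a b =>
        rw [Sym2.mk_isDiag_iff] at hd
        rcases Sym2.mem_iff.mp hx with rfl | rfl
        · exact ⟨b, ⟨fun hb => hd hb.symm, trivial⟩, rfl⟩
        · exact ⟨a, ⟨fun ha => hd ha, trivial⟩, Sym2.eq_swap⟩
    · rintro ⟨y, ⟨hy, -⟩, rfl⟩
      exact ⟨by simp [Sym2.mk_isDiag_iff]; exact fun h => hy h.symm,
        Sym2.mem_mk_left _ _⟩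
  rw [h1, Finset.card_image_of_injOn, card_erase_of_mem (mem_univ x), card_univ]
  intro y1 _ y2 _ hy
  exact (Sym2.congr_right.mp hy)

/-- For odd `n > 1`, if a `(K_2, K_{1,n})`-URD`(v; 1, s)` exists with `s ≥ 1`, then
`v` is even, `n + 1` divides `v`, and `n` divides `v - 2`. -/
theorem divisibility_conditions (n : ℕ) (hn : 1 < n) (hodd : Odd n)
    (v s : ℕ) (hv : 0 < v) (hs : 1 ≤ s) (h : IsURD n v 1 s) :
    Even v ∧ (n + 1) ∣ v ∧ n ∣ (v - 2) := by
  classical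
  obtain ⟨M, F, hM, hF, hMM, hFF, hMF, hcov⟩ := h
  choose P hP hFP using hF
  have hcard : Fintype.card (Fin v) = v := Fintype.card_fin v
  have hvm : ∀ j, v = (n+1) * (P j).card := fun j => by
    have := urd_starFamily_card (hP j); rwa [hcard] at this
  set j0 : Fin s := ⟨0, hs⟩ with hj0
  set m : ℕ := (P j0).card with hm
  have hv2 : v = (n+1)*m := hvm j0
  have hPm : ∀ j, (P j).card = m :=
    fun j => Nat.eq_of_mul_eq_mul_left (Nat.succ_pos n) ((hvm j).symm.trans (hvm j0))
  have hmpos : 0 < m := by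
    rcases Nat.eq_zero_or_pos m with h0 | h0
    · rw [h0, Nat.mul_zero] at hv2; omega
    · exact h0
  have hvge : 2 ≤ v := by
    have : (n + 1) * 1 ≤ (n+1)*m := Nat.mul_le_mul_left _ hmpos
    omega
  have heven : Even v := by
    rw [← hcard, urd_oneFactor_card (hM 0)]
    exact even_two_mul _
  set C : Fin s → Finset (Fin v) := fun j => (P j).image Prod.fst with hC
  have key : ∀ x : Fin v,
      v - 1 = 1 + ∑ j, (if x ∈ C j then n else 1) := by
    intro x
    have h1 := urd_total_deg (V := Fin v) x
    rw [hcard] at h1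
    have h2 : (univ.filter (fun e : Sym2 (Fin v) => ¬ e.IsDiag))
        = univ.biUnion M ∪ univ.biUnion F := by
      ext e
      simp only [mem_filter, mem_univ, true_and]
      exact (hcov e).symm
    rw [h2] at h1
    have hdisj : Disjoint (univ.biUnion M) (univ.biUnion F) := by
      rw [Finset.disjoint_biUnion_left]
      intro i _
      rw [Finset.disjoint_biUnion_right]
      intro j _
      exact hMF i j
    rw [Finset.filter_union,
      Finset.card_union_of_disjoint (Finset.disjoint_filter_filter hdisj)] at h1
    have hMside : ((univ.biUnion M).filter (fun e => x ∈ e)).card = 1 := by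
      have hM0 : (univ : Finset (Fin 1)).biUnion M = M 0 := by
        rw [Finset.univ_unique, Finset.singleton_biUnion]
        exact congrArg M (Subsingleton.elim _ _)
      rw [hM0]
      exact urd_oneFactor_deg (hM 0) x
    have hFside : ((univ.biUnion F).filter (fun e => x ∈ e)).card
        = ∑ j, (if x ∈ C j then n else 1) := by
      rw [Finset.filter_biUnion, Finset.card_biUnion]
      · refine Finset.sum_congr rfl (fun j _ => ?_)
        rw [hFP j]
        exact urd_star_deg (hP j) x
      · intro i _ j _ hij
        exact Finset.disjoint_filter_filter (hFF i j hij)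
    rw [hMside, hFside] at h1
    omega
  set a : Fin v → ℕ := fun x => (univ.filter (fun j => x ∈ C j)).card with ha
  set b : Fin v → ℕ := fun x => (univ.filter (fun j => x ∉ C j)).card with hb
  have hab : ∀ x, a x + b x = s := fun x => by
    have := Finset.card_filter_add_card_filter_not
      (s := (univ : Finset (Fin s))) (p := fun j => x ∈ C j)
    simpa [ha, hb] using this
  have key2 : ∀ x : Fin v, v - 1 = 1 + (a x * n + b x) := by
    intro x
    rw [key x]
    congr 1
    rw [Finset.sum_ite, Finset.sum_const, Finset.sum_const, smul_eq_mul,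
      smul_eq_mul, mul_one]
  set A : ℕ := ∑ x : Fin v, a x with hA
  set B : ℕ := ∑ x : Fin v, b x with hB
  have hsum : v * (v - 1) = v + (A * n + B) := by
    calc v * (v-1) = ∑ _x : Fin v, (v-1) := by
          rw [Finset.sum_const, card_univ, Fintype.card_fin, smul_eq_mul]
      _ = ∑ x : Fin v, (1 + (a x * n + b x)) :=
          Finset.sum_congr rfl (fun x _ => key2 x)
      _ = (∑ _x : Fin v, 1) + ((∑ x : Fin v, a x * n) + ∑ x : Fin v, b x) := by
          rw [Finset.sum_add_distrib, Finset.sum_add_distrib]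
      _ = v + (A * n + B) := by
          rw [Finset.sum_const, card_univ, Fintype.card_fin, smul_eq_mul, mul_one,
            ← Finset.sum_mul, ← hA, ← hB]
  have hABsum : A + B = v * s := by
    rw [hA, hB, ← Finset.sum_add_distrib]
    calc ∑ x : Fin v, (a x + b x) = ∑ _x : Fin v, s :=
          Finset.sum_congr rfl (fun x _ => hab x)
      _ = v * s := by rw [Finset.sum_const, card_univ, Fintype.card_fin, smul_eq_mul]
  have hAval : A = s * m := by
    rw [hA]
    have hax : ∀ x, a x = ∑ j, (if x ∈ C j then 1 else 0) := fun x => by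
      rw [ha]; simp only; rw [Finset.card_filter]
    rw [Finset.sum_congr rfl (fun x _ => hax x), Finset.sum_comm]
    have hcj : ∀ j : Fin s, (∑ x : Fin v, if x ∈ C j then 1 else 0) = m := by
      intro j
      rw [← Finset.card_filter]
      have hCj : (univ.filter (fun x => x ∈ C j)) = C j := by
        ext y; simp
      rw [hCj, hC]
      simp only
      rw [urd_starFamily_centers_card (hP j), hPm j]
    rw [Finset.sum_congr rfl (fun j _ => hcj j), Finset.sum_const, card_univ,
      Fintype.card_fin, smul_eq_mul]
  have hBval : B = n * (m * s) := by
    have h1 : s * m + B = (n+1) * m * s := by rw [← hAval, ← hv2]; exact hABsum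
    have h2 : (n+1) * m * s = n * (m * s) + s * m := by ring
    rw [h2] at h1
    omega
  refine ⟨heven, ⟨m, hv2⟩, ?_⟩
  obtain ⟨w, hw⟩ : ∃ w, v = w + 2 := ⟨v - 2, by omega⟩
  have hsum2 : (w + 2) * (w + 1) = (w + 2) + (A * n + B) := by
    rw [hw] at hsum; simpa using hsum
  rw [hAval, hBval] at hsum2
  have hfin : (w + 2) * w = 2 * (n * (m * s)) := by
    have hexp : (w + 2) * (w + 1) = (w + 2) * w + (w + 2) := by ring
    have h2 : s * m * n + n * (m * s) = 2 * (n * (m * s)) := by ring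
    omega
  have hfin2 : m * ((n + 1) * w) = m * (2 * (n * s)) := by
    have hww : (w + 2) * w = (n + 1) * m * w := by rw [← hw, hv2]
    rw [hww] at hfin
    calc m * ((n + 1) * w) = (n + 1) * m * w := by ring
      _ = 2 * (n * (m * s)) := hfin
      _ = m * (2 * (n * s)) := by ring
  have hfin3 : (n + 1) * w = 2 * (n * s) :=
    Nat.eq_of_mul_eq_mul_left hmpos hfin2
  have hdvd : n ∣ w * (n + 1) := by
    refine ⟨2 * s, ?_⟩
    calc w * (n + 1) = (n + 1) * w := by ring
      _ = 2 * (n * s) := hfin3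
      _ = n * (2 * s) := by ring
  have hcop : Nat.Coprime n (n + 1) := by
    simpa using (Nat.coprime_succ_self n).symm
  have hnw : n ∣ w := Nat.Coprime.dvd_of_dvd_mul_right hcop hdvd
  have hveq : v - 2 = w := by omega
  rw [hveq]
  exact hnw
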